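/- Let w be a word over a finite alphabet T whose Parikh vector P(w) is prime. Suppose that for every state s_q of the circular LTS induced by w at which a factor ab begins (the arc out of s_q is labelled a, the next arc is labelled b, a≠b), and for every state s_j with P_jq(a)≠0, it holds that m·P_jq(a) < n·(P_jq(b)+1), where g=gcd(P(w)(a),P(w)(b)), m=P(w)(b)/g, n=P(w)(a)/g. Then w is cyclically solvable by a weighted marked graph. -/

import Mathlib

/-- A labelled transition system with initial state. -/
structure LTS (S L : Type) where
  tr : S → L → S → Prop
  init : S

namespace LTS

/-- Reachability between states of an LTS (directed paths of arcs). -/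
def reach {S L : Type} (A : LTS S L) : S → S → Prop :=
  Relation.ReflTransGen (fun s s' => ∃ t, A.tr s t s')

/-- An LTS is reversible if every state is reachable from the initial state
and the initial state is reachable from every state. -/
def reversible {S L : Type} (A : LTS S L) : Prop :=
  ∀ s : S, A.reach A.init s ∧ A.reach s A.init

end LTS

/-- Isomorphism of labelled transition systems. -/
def ltsIso {S1 S2 L : Type} (A : LTS S1 L) (B : LTS S2 L) : Prop :=
  ∃ ζ : S1 ≃ S2, ζ A.init = B.init ∧ ∀ s t s', A.tr s t s' ↔ B.tr (ζ s) t (ζ s')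

/-- A weighted Petri net with places `P` and transitions `T`:
`pre p t` is the weight of the arc from `p` to `t`, `post t p` of the arc from `t` to `p`. -/
structure PetriNet (P T : Type) where
  pre : P → T → ℕ
  post : T → P → ℕ

namespace PetriNet

variable {P T : Type}

/-- A transition `t` is enabled at marking `M`. -/
def enabled (N : PetriNet P T) (M : P → ℕ) (t : T) : Prop :=
  ∀ p, N.pre p t ≤ M p

/-- A place `p` is enabled by a marking `M`. -/
def placeEnabled (N : PetriNet P T) (M : P → ℕ) (p : P) : Prop :=
  ∀ t, N.pre p t ≤ M p

/-- The marking obtained by firing `t` at `M`. -/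
def fire (N : PetriNet P T) (M : P → ℕ) (t : T) : P → ℕ :=
  fun p => M p - N.pre p t + N.post t p

/-- `M [t⟩ M'`. -/
def step (N : PetriNet P T) (M : P → ℕ) (t : T) (M' : P → ℕ) : Prop :=
  N.enabled M t ∧ M' = N.fire M t

/-- A marking `M'` is reachable from `M` by a finite sequence of firings. -/
def Reach (N : PetriNet P T) (M M' : P → ℕ) : Prop :=
  Relation.ReflTransGen (fun M1 M2 => ∃ t, N.step M1 t M2) M M'

/-- A sequence of transitions is firable from a marking. -/
def firable (N : PetriNet P T) : (P → ℕ) → List T → Prop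
  | _, [] => True
  | M, t :: σ => N.enabled M t ∧ N.firable (N.fire M t) σ

/-- The marking reached after firing a sequence of transitions. -/
def fireSeq (N : PetriNet P T) : (P → ℕ) → List T → (P → ℕ)
  | M, [] => M
  | M, t :: σ => N.fireSeq (N.fire M t) σ

/-- A net is choice-free if every place has at most one output transition. -/
def choiceFree (N : PetriNet P T) : Prop :=
  ∀ p t t', 0 < N.pre p t → 0 < N.pre p t' → t = t'

/-- A weighted marked graph: each place has at most one output and at most one input transition. -/
def wmg (N : PetriNet P T) : Prop :=
  N.choiceFree ∧ ∀ p t t', 0 < N.post t p → 0 < N.post t' p → t = t'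

/-- A net is pure if no place is a side condition of some transition. -/
def isPure (N : PetriNet P T) : Prop :=
  ∀ p t, ¬(0 < N.pre p t ∧ 0 < N.post t p)

/-- Liveness: from every reachable marking, every transition can eventually fire again. -/
def live (N : PetriNet P T) (M0 : P → ℕ) : Prop :=
  ∀ (t : T) (M : P → ℕ), N.Reach M0 M → ∃ M', N.Reach M M' ∧ N.enabled M' t

/-- The reachability graph of a system, as an LTS on the reachable markings. -/
def RG (N : PetriNet P T) (M0 : P → ℕ) : LTS {M : P → ℕ // N.Reach M0 M} T where
  tr := fun M t M' => N.step M.1 t M'.1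
  init := ⟨M0, Relation.ReflTransGen.refl⟩

end PetriNet

/-- A system solves an LTS if its reachability graph is isomorphic to it. -/
def Solves {Pl T S : Type} (N : PetriNet Pl T) (M0 : Pl → ℕ) (A : LTS S T) : Prop :=
  ltsIso (N.RG M0) A

/-- CF-solvability of an LTS. -/
def CFSolvable {S L : Type} (A : LTS S L) : Prop :=
  ∃ (k : ℕ) (N : PetriNet (Fin k) L) (M0 : Fin k → ℕ), N.choiceFree ∧ Solves N M0 A

/-- WMG-solvability of an LTS. -/
def WMGSolvable {S L : Type} (A : LTS S L) : Prop :=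
  ∃ (k : ℕ) (N : PetriNet (Fin k) L) (M0 : Fin k → ℕ), N.wmg ∧ Solves N M0 A

/-- Solvability of an LTS by a pure choice-free system. -/
def PureCFSolvable {S L : Type} (A : LTS S L) : Prop :=
  ∃ (k : ℕ) (N : PetriNet (Fin k) L) (M0 : Fin k → ℕ),
    N.choiceFree ∧ N.isPure ∧ Solves N M0 A

/-- The circular LTS induced by a (nonempty) word `w`. -/
def circLTS {L : Type} (w : List L) (hw : 0 < w.length) : LTS (Fin w.length) L where
  tr := fun s t s' => t = w.get s ∧ s'.val = (s.val + 1) % w.length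
  init := ⟨0, hw⟩

/-- The Parikh vector of a word. -/
def parikh {L : Type} [DecidableEq L] (w : List L) (t : L) : ℕ := w.count t

/-- A vector of naturals is prime if the gcd of its components equals 1. -/
def primeVec {L : Type} [Fintype L] (Υ : L → ℕ) : Prop := Finset.univ.gcd Υ = 1

/-- A word is cyclically solvable by a WMG. -/
def cyclicWMGSolvable {L : Type} (w : List L) : Prop :=
  ∃ (hw : 0 < w.length) (k : ℕ) (N : PetriNet (Fin k) L) (M0 : Fin k → ℕ),
    N.wmg ∧ Solves N M0 (circLTS w hw)

/-- A word is cyclically solvable by a CF net. -/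
def cyclicCFSolvable {L : Type} (w : List L) : Prop :=
  ∃ (hw : 0 < w.length) (k : ℕ) (N : PetriNet (Fin k) L) (M0 : Fin k → ℕ),
    N.choiceFree ∧ Solves N M0 (circLTS w hw)

/-- A circuit net: places `p_0 … p_{k-1}` and transitions `τ 0 … τ (k-1)` arranged in a
single alternating cycle, `τ i` being the unique output of `p_i` and the unique input
of `p_{i+1 mod k}`. -/
def isCircuit {k : ℕ} {L : Type} (hk : 0 < k) (N : PetriNet (Fin k) L) : Prop :=
  ∃ τ : Fin k ≃ L,
    (∀ (i : Fin k) (t : L), 0 < N.pre i t ↔ t = τ i) ∧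
    (∀ (i : Fin k) (t : L), 0 < N.post t i ↔ t = τ ⟨(i.val + k - 1) % k, Nat.mod_lt _ hk⟩)

/-- A word is cyclically solvable by a circuit system. -/
def cyclicCircuitSolvable {L : Type} (v : List L) : Prop :=
  ∃ (hv : 0 < v.length) (k : ℕ) (hk : 0 < k) (N : PetriNet (Fin k) L) (M0 : Fin k → ℕ),
    isCircuit hk N ∧ Solves N M0 (circLTS v hv)

/-- The ordered pair `a b` is circularly adjacent in `w`. -/
def cAdj {L : Type} (w : List L) (a b : L) : Prop :=
  a ≠ b ∧ ((∃ w1 w2, w = w1 ++ a :: b :: w2) ∨ ∃ w3, w = b :: w3 ++ [a])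

/-- The projection of a word on a two-element sub-alphabet, as a word over that sub-alphabet. -/
def projPair {L : Type} [DecidableEq L] (w : List L) (a b : L) :
    List {x : L // x = a ∨ x = b} :=
  w.filterMap (fun x => if h : x = a ∨ x = b then some ⟨x, h⟩ else none)

/-- The Parikh vector `P_jq` of the segment of `w` read circularly from state `s_j`
to state `s_q` (empty when `j = q`). -/
def segParikh {L : Type} [DecidableEq L] (w : List L) (hw : 0 < w.length)
    (j q : Fin w.length) (t : L) : ℕ :=
  ((List.range ((q.val + w.length - j.val) % w.length)).map
    (fun i => w.get ⟨(j.val + i) % w.length, Nat.mod_lt _ hw⟩)).count t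

/-- A region of an LTS. -/
def isRegion {S L : Type} (A : LTS S L) (R : S → ℕ) (B F : L → ℕ) : Prop :=
  ∀ s t s', A.tr s t s' → B t ≤ R s ∧ R s' = R s - B t + F t

/-- `gcd_p`: the gcd of all (nonzero) input and output weights of a place. -/
def gcdPlace {Pl T : Type} [Fintype T] (N : PetriNet Pl T) (p : Pl) : ℕ :=
  Finset.univ.gcd (fun t => Nat.gcd (N.pre p t) (N.post t p))

/-- Conservativeness of a net. -/
def conservative {Pl T : Type} [Fintype Pl] (N : PetriNet Pl T) : Prop :=
  ∃ X : Pl → ℕ, (∀ p, 1 ≤ X p) ∧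
    ∀ t, ∑ p, (X p : ℤ) * ((N.post t p : ℤ) - (N.pre p t : ℤ)) = 0

/-- The P-subnet induced by a family of places. -/
def restrictNet {Pl T : Type} {k : ℕ} (N : PetriNet Pl T) (π : Fin k → Pl) :
    PetriNet (Fin k) T where
  pre := fun i t => N.pre (π i) t
  post := fun t i => N.post t (π i)

set_option linter.unusedSectionVars false
namespace Stmt7Aux

variable {L : Type} [DecidableEq L]

/-- prefix count -/
def cnt (w : List L) (t : L) (i : ℕ) : ℕ := (w.take i).count t

lemma cnt_zero (w : List L) (t : L) : cnt w t 0 = 0 := rfl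

lemma take_succ_get (w : List L) (i : ℕ) (hi : i < w.length) :
    List.take (i+1) w = List.take i w ++ [w.get ⟨i, hi⟩] := by
  rw [List.take_succ, List.getElem?_eq_getElem hi]; rfl

lemma cnt_succ (w : List L) (t : L) (i : ℕ) (hi : i < w.length) :
    cnt w t (i + 1) = cnt w t i + if w.get ⟨i, hi⟩ = t then 1 else 0 := by
  unfold cnt
  rw [take_succ_get w i hi, List.count_append, List.count_singleton']

lemma cnt_mono (w : List L) (t : L) {i j : ℕ} (h : i ≤ j) : cnt w t i ≤ cnt w t j := by
  have h1 : w.take i = (w.take j).take i := by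
    rw [List.take_take, Nat.min_eq_left h]
  rw [cnt, h1]
  exact (List.take_sublist i (w.take j)).count_le t

lemma cnt_le_count (w : List L) (t : L) (i : ℕ) : cnt w t i ≤ w.count t :=
  (List.take_sublist i w).count_le t

lemma cnt_length (w : List L) (t : L) : cnt w t w.length = w.count t := by
  unfold cnt; rw [List.take_length]

/-- count is constant over an interval with no occurrence of t -/
lemma cnt_const (w : List L) (t : L) {u v : ℕ} (huv : u ≤ v) (hv : v ≤ w.length)
    (h : ∀ r (hr : r < w.length), u ≤ r → r < v → w.get ⟨r, hr⟩ ≠ t) :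
    cnt w t v = cnt w t u := by
  induction v with
  | zero => rw [Nat.le_zero.mp huv]
  | succ v ih =>
    rcases Nat.lt_or_ge u (v+1) with hlt | hge
    · have hu : u ≤ v := by omega
      have hvl : v < w.length := by omega
      rw [cnt_succ w t v hvl, if_neg (h v hvl hu (by omega))]
      simpa using ih hu (by omega) (fun r hr h1 h2 => h r hr h1 (by omega))
    · rw [Nat.le_antisymm huv hge]

lemma sum_count [Fintype L] (l : List L) : ∑ t : L, l.count t = l.length := by
  induction l with
  | nil => simp
  | cons a l ih =>
    simp only [List.count_cons, List.length_cons, ← ih]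
    rw [Finset.sum_add_distrib]
    simp [Finset.sum_ite_eq' Finset.univ a (fun _ => 1)]

/-- counting over a circular chunk that does not wrap -/
lemma chunk (w : List L) (hw : 0 < w.length) (t : L) (J M : ℕ)
    (h : J % w.length + M ≤ w.length) :
    ((List.range M).map (fun o => w.get ⟨(J + o) % w.length, Nat.mod_lt _ hw⟩)).count t
      = cnt w t (J % w.length + M) - cnt w t (J % w.length) := by
  induction M with
  | zero => simp
  | succ M ih =>
    rw [List.range_succ, List.map_append, List.count_append]
    have hM : J % w.length + M < w.length := by omega
    have hidx : (J + M) % w.length = J % w.length + M := by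
      rw [← Nat.mod_add_mod, Nat.mod_eq_of_lt hM]
    have hget : (⟨(J + M) % w.length, Nat.mod_lt _ hw⟩ : Fin w.length)
        = ⟨J % w.length + M, hM⟩ := Fin.ext hidx
    rw [ih (by omega)]
    simp only [List.map_cons, List.map_nil, List.count_singleton', hget]
    have hstep : J % w.length + (M + 1) = (J % w.length + M) + 1 := by omega
    rw [hstep, cnt_succ w t _ hM]
    have := cnt_mono w t (Nat.le_add_right (J % w.length) M)
    by_cases hh : w.get ⟨J % w.length + M, hM⟩ = t <;> simp [hh] <;> omega

lemma segParikh_le (w : List L) (hw : 0 < w.length) (j q : Fin w.length) (t : L)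
    (h : (j : ℕ) ≤ (q : ℕ)) :
    segParikh w hw j q t = cnt w t q - cnt w t j := by
  have hlen : ((q : ℕ) + w.length - (j : ℕ)) % w.length = (q : ℕ) - (j : ℕ) := by
    have h1 : (q : ℕ) + w.length - (j : ℕ) = w.length + ((q : ℕ) - (j : ℕ)) := by omega
    rw [h1, Nat.add_mod_left, Nat.mod_eq_of_lt (by omega)]
  unfold segParikh
  rw [hlen]
  have := chunk w hw t (j : ℕ) ((q : ℕ) - (j : ℕ))
    (by rw [Nat.mod_eq_of_lt j.isLt]; omega)
  rw [Nat.mod_eq_of_lt j.isLt] at this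
  have hidx : (j : ℕ) + ((q : ℕ) - (j : ℕ)) = (q : ℕ) := by omega
  rw [hidx] at this
  rw [this]

lemma segParikh_gt (w : List L) (hw : 0 < w.length) (j q : Fin w.length) (t : L)
    (h : (q : ℕ) < (j : ℕ)) :
    segParikh w hw j q t = (w.count t - cnt w t j) + cnt w t q := by
  have hlen : ((q : ℕ) + w.length - (j : ℕ)) % w.length
      = (w.length - (j : ℕ)) + (q : ℕ) := by
    rw [Nat.mod_eq_of_lt (by omega)]
    omega
  unfold segParikh
  rw [hlen, List.range_add, List.map_append, List.count_append, List.map_map]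
  have h1 := chunk w hw t (j : ℕ) (w.length - (j : ℕ))
    (by rw [Nat.mod_eq_of_lt j.isLt]; omega)
  rw [Nat.mod_eq_of_lt j.isLt] at h1
  have h1' : (j : ℕ) + (w.length - (j : ℕ)) = w.length := by omega
  rw [h1', cnt_length] at h1
  rw [h1]
  have h2 : ((List.range (q : ℕ)).map
      ((fun o => w.get ⟨((j : ℕ) + o) % w.length, Nat.mod_lt _ hw⟩) ∘
        (fun x => (w.length - (j : ℕ)) + x))).count t = cnt w t q := by
    have hfun : ((fun o => w.get ⟨((j : ℕ) + o) % w.length, Nat.mod_lt _ hw⟩) ∘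
        (fun x => (w.length - (j : ℕ)) + x))
        = (fun o => w.get ⟨(w.length + o) % w.length, Nat.mod_lt _ hw⟩) := by
      funext o
      simp only [Function.comp]
      congr 1
      apply Fin.ext
      simp only []
      have : (j : ℕ) + ((w.length - (j : ℕ)) + o) = w.length + o := by omega
      rw [this]
    rw [hfun]
    have h3 := chunk w hw t w.length (q : ℕ)
      (by rw [Nat.mod_self]; omega)
    rw [Nat.mod_self] at h3
    simpa [cnt_zero] using h3
  rw [h2]

/-- output weight of x into place (x,y) -/
def mm (w : List L) (x y : L) : ℕ := w.count y / Nat.gcd (w.count x) (w.count y)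
/-- input weight of place (x,y) into y -/
def nn (w : List L) (x y : L) : ℕ := w.count x / Nat.gcd (w.count x) (w.count y)

lemma mul_key (w : List L) (x y : L) :
    mm w x y * w.count x = nn w x y * w.count y := by
  unfold mm nn
  rcases Nat.eq_zero_or_pos (Nat.gcd (w.count x) (w.count y)) with hg | hg
  · have hx := Nat.eq_zero_of_gcd_eq_zero_left hg
    have hy := Nat.eq_zero_of_gcd_eq_zero_right hg
    rw [hx, hy]
  · set g := Nat.gcd (w.count x) (w.count y) with hgdef
    obtain ⟨x', hx'⟩ : g ∣ w.count x := Nat.gcd_dvd_left _ _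
    obtain ⟨y', hy'⟩ : g ∣ w.count y := Nat.gcd_dvd_right _ _
    rw [hx', hy', Nat.mul_div_cancel_left _ hg, Nat.mul_div_cancel_left _ hg]
    ring

lemma nn_pos (w : List L) (x y : L) (hx : w.count x ≠ 0) : 0 < nn w x y :=
  Nat.div_pos (Nat.le_of_dvd (Nat.pos_of_ne_zero hx) (Nat.gcd_dvd_left _ _))
    (Nat.pos_of_ne_zero (fun h => hx (Nat.eq_zero_of_gcd_eq_zero_left h)))

lemma mm_pos (w : List L) (x y : L) (hy : w.count y ≠ 0) : 0 < mm w x y :=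
  Nat.div_pos (Nat.le_of_dvd (Nat.pos_of_ne_zero hy) (Nat.gcd_dvd_right _ _))
    (Nat.pos_of_ne_zero (fun h => hy (Nat.eq_zero_of_gcd_eq_zero_right h)))

lemma mm_diag (w : List L) (x : L) : mm w x x = nn w x x := rfl

/-- the pre weight function, on places L × L -/
def Pre (w : List L) (pl : L × L) (t : L) : ℕ :=
  if t = pl.2 ∧ pl.1 ≠ pl.2 then nn w pl.1 pl.2 else 0
/-- the post weight function -/
def Post (w : List L) (t : L) (pl : L × L) : ℕ :=
  if t = pl.1 ∧ pl.1 ≠ pl.2 then mm w pl.1 pl.2 else 0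
/-- initial marking -/
def M0f (w : List L) (pl : L × L) : ℕ :=
  Finset.sup Finset.univ (fun p : Fin w.length =>
    if w.get p = pl.2 ∧ pl.1 ≠ pl.2 then
      nn w pl.1 pl.2 * (cnt w pl.2 p + 1) - mm w pl.1 pl.2 * cnt w pl.1 p
    else 0)
/-- marking after i steps -/
def MKf (w : List L) (i : ℕ) (pl : L × L) : ℕ :=
  M0f w pl + mm w pl.1 pl.2 * cnt w pl.1 i - nn w pl.1 pl.2 * cnt w pl.2 i

lemma MKf_zero (w : List L) (pl : L × L) : MKf w 0 pl = M0f w pl := by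
  unfold MKf; rw [cnt_zero, cnt_zero]; simp

lemma M0_ge (w : List L) (x y : L) (p : Fin w.length) (hp : w.get p = y) (hxy : x ≠ y) :
    nn w x y * (cnt w y p + 1) - mm w x y * cnt w x p ≤ M0f w (x, y) := by
  have := Finset.le_sup (f := fun p : Fin w.length =>
    if w.get p = (x, y).2 ∧ (x, y).1 ≠ (x, y).2 then
      nn w (x, y).1 (x, y).2 * (cnt w (x, y).2 p + 1) - mm w (x, y).1 (x, y).2 * cnt w (x, y).1 p
    else 0) (Finset.mem_univ p)
  dsimp only at this
  rw [if_pos ⟨hp, hxy⟩] at this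
  exact this

lemma sub_ok (w : List L) : ∀ i, i ≤ w.length → ∀ x y : L,
    nn w x y * cnt w y i ≤ M0f w (x, y) + mm w x y * cnt w x i := by
  intro i
  induction i with
  | zero => intro _ x y; rw [cnt_zero]; simp
  | succ i ih =>
    intro hi x y
    have hiw : i < w.length := by omega
    have IH := ih (by omega) x y
    rw [cnt_succ w y i hiw, cnt_succ w x i hiw]
    by_cases hcy : w.get ⟨i, hiw⟩ = y
    · rw [if_pos hcy]
      by_cases hxy : x = y
      · subst hxy
        rw [if_pos hcy, ← mm_diag]
        exact Nat.le_add_left _ _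
      · have hM := M0_ge w x y ⟨i, hiw⟩ hcy hxy
        have hx : w.get ⟨i, hiw⟩ ≠ x := by rw [hcy]; exact fun h => hxy h.symm
        rw [if_neg hx]
        simp only [Fin.val_mk] at hM
        rw [Nat.add_zero]
        exact Nat.sub_le_iff_le_add.mp hM
    · rw [if_neg hcy]
      by_cases hcx : w.get ⟨i, hiw⟩ = x
      · rw [if_pos hcx, Nat.add_zero]
        exact le_trans IH (Nat.add_le_add_left
          (Nat.mul_le_mul_left _ (Nat.le_succ _)) _)
      · rw [if_neg hcx, Nat.add_zero, Nat.add_zero]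
        exact IH

lemma enab_pl (w : List L) (i : ℕ) (hi : i < w.length) (pl : L × L) :
    Pre w pl (w.get ⟨i, hi⟩) ≤ MKf w i pl := by
  obtain ⟨x, y⟩ := pl
  unfold Pre
  dsimp only
  split
  case isTrue h =>
    obtain ⟨h1, h2⟩ := h
    have hM' := Nat.sub_le_iff_le_add.mp (M0_ge w x y ⟨i, hi⟩ h1 h2)
    have hS := sub_ok w i (le_of_lt hi) x y
    simp only [Fin.val_mk] at hM'
    rw [Nat.mul_succ] at hM'
    unfold MKf
    dsimp only
    omega
  case isFalse _ => exact Nat.zero_le _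

lemma fire_pl (w : List L) (i : ℕ) (hi : i < w.length) (pl : L × L) :
    MKf w i pl - Pre w pl (w.get ⟨i, hi⟩) + Post w (w.get ⟨i, hi⟩) pl
      = MKf w (i + 1) pl := by
  obtain ⟨x, y⟩ := pl
  have hS := sub_ok w i (le_of_lt hi) x y
  have hS1 := sub_ok w (i + 1) (by omega) x y
  unfold Pre Post MKf
  dsimp only
  by_cases h12 : x = y
  · subst h12
    simp only [ne_eq, not_true_eq_false, and_false, if_false, ← mm_diag]
    by_cases ht : w.get ⟨i, hi⟩ = x
    · rw [cnt_succ w x i hi, if_pos ht] at hS1 ⊢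
      simp only [Nat.add_zero, Nat.mul_succ] at hS1 ⊢
      omega
    · rw [cnt_succ w x i hi, if_neg ht] at hS1 ⊢
      simp only [Nat.add_zero, Nat.mul_succ] at hS1 ⊢
      omega
  · by_cases hty : w.get ⟨i, hi⟩ = y
    · have htx : ¬ w.get ⟨i, hi⟩ = x := by rw [hty]; exact fun h => h12 h.symm
      rw [if_pos ⟨hty, h12⟩, if_neg (by tauto)]
      rw [cnt_succ w x i hi, cnt_succ w y i hi, if_neg htx, if_pos hty] at hS1 ⊢
      simp only [Nat.add_zero, Nat.mul_succ] at hS1 ⊢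
      omega
    · by_cases htx : w.get ⟨i, hi⟩ = x
      · rw [if_neg (by tauto), if_pos ⟨htx, h12⟩]
        rw [cnt_succ w x i hi, cnt_succ w y i hi, if_neg hty, if_pos htx] at hS1 ⊢
        simp only [Nat.add_zero, Nat.mul_succ] at hS1 ⊢
        omega
      · rw [if_neg (by tauto), if_neg (by tauto)]
        rw [cnt_succ w x i hi, cnt_succ w y i hi, if_neg hty, if_neg htx] at hS1 ⊢
        simp only [Nat.add_zero, Nat.mul_succ] at hS1 ⊢
        omega

lemma cycle_pl (w : List L) (pl : L × L) : MKf w w.length pl = MKf w 0 pl := by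
  obtain ⟨x, y⟩ := pl
  have := mul_key w x y
  unfold MKf
  dsimp only
  rw [cnt_length, cnt_length, cnt_zero, cnt_zero]
  omega

lemma mul_split (m x u y : ℕ) (h : x + u = y) : m * y = m * x + m * u := by
  subst h; ring

lemma disab_conclude (w : List L) (hw : 0 < w.length) (i : ℕ) (hi : i < w.length)
    (a b : L) (hab : a ≠ b) (hn1 : 1 ≤ nn w a b)
    (hSub : nn w a b * cnt w b i ≤ M0f w (a, b) + mm w a b * cnt w a i)
    (hI : mm w a b * cnt w a i < nn w a b * (cnt w b i + 1))
    (hII : ∀ p : Fin w.length, w.get p = b →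
      nn w a b * (cnt w b p + 1) + mm w a b * cnt w a i
        < nn w a b * (cnt w b i + 1) + mm w a b * cnt w a p) :
    MKf w i (a, b) < Pre w (a, b) b := by
  have hPre : Pre w (a, b) b = nn w a b := by
    unfold Pre; dsimp only; rw [if_pos ⟨rfl, hab⟩]
  rw [hPre]
  have hM0lt : M0f w (a, b) + mm w a b * cnt w a i
      < nn w a b * (cnt w b i + 1) := by
    have hpos : 0 < nn w a b * (cnt w b i + 1) - mm w a b * cnt w a i := by omega
    have hsup : M0f w (a, b) < nn w a b * (cnt w b i + 1) - mm w a b * cnt w a i := by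
      refine (Finset.sup_lt_iff hpos).mpr fun p _ => ?_
      by_cases hpb : w.get p = b
      · rw [if_pos (by dsimp only; exact ⟨hpb, hab⟩)]
        have := hII p hpb
        dsimp only
        omega
      · rw [if_neg (by dsimp only; tauto)]
        omega
    omega
  unfold MKf
  dsimp only
  rw [Nat.mul_succ] at hM0lt
  omega

lemma disab_pl (w : List L) (hw : 0 < w.length)
    (hc : ∀ (q : Fin w.length) (a b : L), a ≠ b →
      w.get q = a → w.get ⟨(q.val + 1) % w.length, Nat.mod_lt _ hw⟩ = b →
      ∀ j : Fin w.length, segParikh w hw j q a ≠ 0 →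
        mm w a b * segParikh w hw j q a < nn w a b * (segParikh w hw j q b + 1))
    (i : ℕ) (hi : i < w.length) (b : L) (hb : b ≠ w.get ⟨i, hi⟩) :
    ∃ pl : L × L, MKf w i pl < Pre w pl b := by
  by_cases hb0 : w.count b = 0
  · -- b does not occur in w
    refine ⟨(w.get ⟨i, hi⟩, b), ?_⟩
    have hxb : w.get ⟨i, hi⟩ ≠ b := fun h => hb h.symm
    have hx0 : w.count (w.get ⟨i, hi⟩) ≠ 0 :=
      Nat.pos_iff_ne_zero.mp (List.count_pos_iff.mpr (w.get_mem ⟨i, hi⟩))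
    have hnn1 : nn w (w.get ⟨i, hi⟩) b = 1 := by
      unfold nn; rw [hb0, Nat.gcd_zero_right, Nat.div_self (Nat.pos_of_ne_zero hx0)]
    have hmm0 : mm w (w.get ⟨i, hi⟩) b = 0 := by
      unfold mm; rw [hb0, Nat.zero_div]
    have hM0 : M0f w (w.get ⟨i, hi⟩, b) = 0 := by
      refine Nat.le_zero.mp (Finset.sup_le fun p _ => ?_)
      have hpnb : w.get p ≠ b := by
        intro h
        have hmem : b ∈ w := by rw [← h]; simpa using w.get_mem p.1 p.2
        have := List.count_pos_iff.mpr hmem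
        omega
      rw [if_neg (by dsimp only; tauto)]
    have hPre : Pre w (w.get ⟨i, hi⟩, b) b = 1 := by
      unfold Pre; dsimp only; rw [if_pos ⟨rfl, hxb⟩, hnn1]
    have hMK : MKf w i (w.get ⟨i, hi⟩, b) = 0 := by
      unfold MKf; dsimp only; rw [hM0, hmm0]; simp
    omega
  · -- b occurs in w
    obtain ⟨rf, hrf⟩ := List.mem_iff_get.mp (List.count_pos_iff.mp (Nat.pos_of_ne_zero hb0))
    have hwit : w.get ⟨(i + ((((rf : ℕ) + w.length - (i + 1)) % w.length) + 1)) % w.length,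
        Nat.mod_lt _ hw⟩ = b := by
      have hidx : (i + (((rf : ℕ) + w.length - (i + 1)) % w.length + 1)) % w.length
          = (rf : ℕ) := by
        have h1 : i + (((rf : ℕ) + w.length - (i + 1)) % w.length + 1)
            = (((rf : ℕ) + w.length - (i + 1)) % w.length) + (i + 1) := by omega
        rw [h1, Nat.mod_add_mod]
        have h2 : (rf : ℕ) + w.length - (i + 1) + (i + 1) = (rf : ℕ) + w.length := by
          have := rf.isLt; omega
        rw [h2, Nat.add_mod_right, Nat.mod_eq_of_lt rf.isLt]
      have heq : (⟨(i + (((rf : ℕ) + w.length - (i + 1)) % w.length + 1)) % w.length,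
          Nat.mod_lt _ hw⟩ : Fin w.length) = rf := Fin.ext hidx
      rw [heq]; exact hrf
    have hex : ∃ d : ℕ, w.get ⟨(i + (d + 1)) % w.length, Nat.mod_lt _ hw⟩ = b :=
      ⟨_, hwit⟩
    set D := Nat.find hex + 1 with hDdef
    have hDb : w.get ⟨(i + D) % w.length, Nat.mod_lt _ hw⟩ = b := Nat.find_spec hex
    have hDmin : ∀ e, e < D → w.get ⟨(i + e) % w.length, Nat.mod_lt _ hw⟩ ≠ b := by
      intro e he
      match e with
      | 0 =>
        have : (⟨(i + 0) % w.length, Nat.mod_lt _ hw⟩ : Fin w.length) = ⟨i, hi⟩ :=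
          Fin.ext (by show (i + 0) % w.length = i
                      rw [Nat.add_zero]; exact Nat.mod_eq_of_lt hi)
        rw [this]; exact fun h => hb h.symm
      | (e' + 1) => exact Nat.find_min hex (by omega)
    have hDk : D ≤ w.length := by
      have h4 := Nat.find_min' hex hwit
      have h3 : ((rf : ℕ) + w.length - (i + 1)) % w.length < w.length := Nat.mod_lt _ hw
      omega
    have hD1 : 1 ≤ D := by omega
    set qn := (i + (D - 1)) % w.length with hqndef
    have hq : qn < w.length := Nat.mod_lt _ hw
    set a := w.get ⟨qn, hq⟩ with hadef
    have hab : a ≠ b := hDmin (D - 1) (by omega)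
    have hq1 : w.get ⟨(qn + 1) % w.length, Nat.mod_lt _ hw⟩ = b := by
      have hidx : (qn + 1) % w.length = (i + D) % w.length := by
        rw [hqndef, Nat.mod_add_mod]
        have h5 : i + (D - 1) + 1 = i + D := by omega
        rw [h5]
      have : (⟨(qn + 1) % w.length, Nat.mod_lt _ hw⟩ : Fin w.length)
          = ⟨(i + D) % w.length, Nat.mod_lt _ hw⟩ := Fin.ext hidx
      rw [this]; exact hDb
    refine ⟨(a, b), ?_⟩
    have hPre : Pre w (a, b) b = nn w a b := by
      unfold Pre; dsimp only; rw [if_pos ⟨rfl, hab⟩]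
    have ha0 : w.count a ≠ 0 := by
      have hmem : a ∈ w := by rw [hadef]; exact w.get_mem ⟨qn, hq⟩
      have := List.count_pos_iff.mpr hmem
      omega
    have hn1 : 1 ≤ nn w a b := nn_pos w a b ha0
    have hm1 : 1 ≤ mm w a b := mm_pos w a b hb0
    have key := mul_key w a b
    have hSub := sub_ok w i (le_of_lt hi) a b
    -- window facts
    have hgeta : w.get ⟨qn, hq⟩ = a := hadef.symm
    by_cases hwrap : i + D ≤ w.length
    case pos =>
      -- no wraparound of the b-free window
      have hqnA : qn = i + (D - 1) := by
        rw [hqndef]; exact Nat.mod_eq_of_lt (by omega)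
      have hBq : cnt w b qn = cnt w b i := by
        rw [hqnA]
        refine cnt_const w b (by omega) (by omega) ?_
        intro r hr h1 h2
        have heq : (⟨(i + (r - i)) % w.length, Nat.mod_lt _ hw⟩ : Fin w.length)
            = ⟨r, hr⟩ := by
          refine Fin.ext ?_
          show (i + (r - i)) % w.length = r
          have h3 : i + (r - i) = r := by omega
          rw [h3]; exact Nat.mod_eq_of_lt hr
        have h4 := hDmin (r - i) (by omega)
        rw [heq] at h4; exact h4
      have hAq : cnt w a i ≤ cnt w a qn := by
        rw [hqnA]; exact cnt_mono w a (by omega)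
      have hI : mm w a b * cnt w a i < nn w a b * (cnt w b i + 1) := by
        by_cases hz : cnt w a qn = 0
        · have h8 : cnt w a i = 0 := by omega
          rw [h8, Nat.mul_zero]
          exact Nat.mul_pos (by omega) (by omega)
        · have hseg_a : segParikh w hw ⟨0, hw⟩ ⟨qn, hq⟩ a = cnt w a qn := by
            rw [segParikh_le w hw ⟨0, hw⟩ ⟨qn, hq⟩ a (by exact Nat.zero_le _)]
            show cnt w a qn - cnt w a 0 = cnt w a qn
            rw [cnt_zero]
            omega
          have hseg_b : segParikh w hw ⟨0, hw⟩ ⟨qn, hq⟩ b = cnt w b i := by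
            rw [segParikh_le w hw ⟨0, hw⟩ ⟨qn, hq⟩ b (by exact Nat.zero_le _)]
            show cnt w b qn - cnt w b 0 = cnt w b i
            rw [cnt_zero, hBq]
            omega
          have hcp := hc ⟨qn, hq⟩ a b hab hgeta hq1 ⟨0, hw⟩ (by rw [hseg_a]; exact hz)
          rw [hseg_a, hseg_b] at hcp
          have h9 : mm w a b * cnt w a i ≤ mm w a b * cnt w a qn :=
            Nat.mul_le_mul_left _ hAq
          omega
      have hII : ∀ p : Fin w.length, w.get p = b →
          nn w a b * (cnt w b p + 1) + mm w a b * cnt w a i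
            < nn w a b * (cnt w b i + 1) + mm w a b * cnt w a p := by
        intro p hpb
        have hpb' : w.get ⟨(p : ℕ), p.isLt⟩ = b := by rw [Fin.eta]; exact hpb
        have e2 : cnt w b ((p : ℕ) + 1) = cnt w b p + 1 := by
          rw [cnt_succ w b p p.isLt, if_pos hpb']
        have e1 : cnt w a ((p : ℕ) + 1) = cnt w a p := by
          rw [cnt_succ w a p p.isLt, if_neg (by rw [hpb']; exact fun h => hab h.symm)]
          omega
        have hpA : (p : ℕ) < i ∨ i + D ≤ (p : ℕ) := by
          by_contra hcon
          push_neg at hcon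
          obtain ⟨hA, hB⟩ := hcon
          refine hDmin ((p : ℕ) - i) (by omega) ?_
          have heq : (⟨(i + ((p : ℕ) - i)) % w.length, Nat.mod_lt _ hw⟩ : Fin w.length)
              = ⟨(p : ℕ), p.isLt⟩ := by
            refine Fin.ext ?_
            show (i + ((p : ℕ) - i)) % w.length = (p : ℕ)
            have h3 : i + ((p : ℕ) - i) = (p : ℕ) := by omega
            rw [h3]; exact Nat.mod_eq_of_lt p.isLt
          rw [heq]; exact hpb'
        have hmulsucc1 : nn w a b * (cnt w b p + 1) = nn w a b * cnt w b p + nn w a b :=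
          by ring
        have hmulsucc2 : nn w a b * (cnt w b i + 1) = nn w a b * cnt w b i + nn w a b :=
          by ring
        rcases hpA with hp1 | hp2
        · -- p before i
          set j' : Fin w.length := ⟨(p : ℕ) + 1, by omega⟩ with hj'def
          have hj'q : (j' : ℕ) ≤ qn := by
            show (p : ℕ) + 1 ≤ qn
            omega
          have hsa : segParikh w hw j' ⟨qn, hq⟩ a = cnt w a qn - cnt w a ((p : ℕ) + 1) :=
            segParikh_le w hw j' ⟨qn, hq⟩ a hj'q
          have hsb : segParikh w hw j' ⟨qn, hq⟩ b = cnt w b qn - cnt w b ((p : ℕ) + 1) :=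
            segParikh_le w hw j' ⟨qn, hq⟩ b hj'q
          by_cases hz : cnt w a qn - cnt w a ((p : ℕ) + 1) = 0
          · have hmono1 : cnt w a i ≤ cnt w a qn := hAq
            have hmono2 : cnt w b p + 1 ≤ cnt w b i := by
              rw [← e2]; exact cnt_mono w b (by omega)
            have h9 : mm w a b * cnt w a i ≤ mm w a b * cnt w a p :=
              Nat.mul_le_mul_left _ (by omega)
            have h10 : nn w a b * (cnt w b p + 1) ≤ nn w a b * cnt w b i :=
              Nat.mul_le_mul_left _ hmono2
            omega
          · have hcp := hc ⟨qn, hq⟩ a b hab hgeta hq1 j' (by rw [hsa]; exact hz)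
            rw [hsa, hsb] at hcp
            have hm1' : cnt w a ((p : ℕ) + 1) ≤ cnt w a qn := by omega
            have hm2' : cnt w b ((p : ℕ) + 1) ≤ cnt w b i := cnt_mono w b (by omega)
            have E1 : mm w a b * cnt w a qn
                = mm w a b * cnt w a p + mm w a b * (cnt w a qn - cnt w a ((p : ℕ) + 1)) := by
              refine mul_split _ _ _ _ ?_
              omega
            have E2 : nn w a b * cnt w b i
                = nn w a b * (cnt w b p + 1)
                  + nn w a b * (cnt w b qn - cnt w b ((p : ℕ) + 1)) := by
              refine mul_split _ _ _ _ ?_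
              omega
            have E3 : mm w a b * cnt w a i ≤ mm w a b * cnt w a qn :=
              Nat.mul_le_mul_left _ hAq
            have E4 : nn w a b * ((cnt w b qn - cnt w b ((p : ℕ) + 1)) + 1)
                = nn w a b * (cnt w b qn - cnt w b ((p : ℕ) + 1)) + nn w a b := by ring
            omega
        · -- p after the window
          rcases Nat.lt_or_ge ((p : ℕ) + 1) w.length with hpk | hpk
          · -- p + 1 < length
            set j' : Fin w.length := ⟨(p : ℕ) + 1, hpk⟩ with hj'def
            have hqj' : qn < (j' : ℕ) := by
              show qn < (p : ℕ) + 1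
              omega
            have hsa : segParikh w hw j' ⟨qn, hq⟩ a
                = (w.count a - cnt w a ((p : ℕ) + 1)) + cnt w a qn :=
              segParikh_gt w hw j' ⟨qn, hq⟩ a hqj'
            have hsb : segParikh w hw j' ⟨qn, hq⟩ b
                = (w.count b - cnt w b ((p : ℕ) + 1)) + cnt w b qn :=
              segParikh_gt w hw j' ⟨qn, hq⟩ b hqj'
            have hca : cnt w a ((p : ℕ) + 1) ≤ w.count a := cnt_le_count w a _
            have hcb : cnt w b ((p : ℕ) + 1) ≤ w.count b := cnt_le_count w b _
            by_cases hz : (w.count a - cnt w a ((p : ℕ) + 1)) + cnt w a qn = 0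
            · have hz1 : cnt w a p = w.count a := by omega
              have hz2 : cnt w a i = 0 := by omega
              have h10 : nn w a b * (cnt w b p + 1) ≤ nn w a b * w.count b :=
                Nat.mul_le_mul_left _ (by omega)
              have h11 : 1 ≤ nn w a b * (cnt w b i + 1) :=
                Nat.mul_pos (by omega) (by omega)
              rw [hz1, hz2, key, Nat.mul_zero]
              omega
            · have hcp := hc ⟨qn, hq⟩ a b hab hgeta hq1 j' (by rw [hsa]; exact hz)
              rw [hsa, hsb] at hcp
              have E1 : mm w a b * ((w.count a - cnt w a ((p : ℕ) + 1)) + cnt w a qn)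
                  = mm w a b * (w.count a - cnt w a ((p : ℕ) + 1))
                    + mm w a b * cnt w a qn := by ring
              have E2 : mm w a b * w.count a
                  = mm w a b * cnt w a p
                    + mm w a b * (w.count a - cnt w a ((p : ℕ) + 1)) := by
                refine mul_split _ _ _ _ ?_
                omega
              have E3 : nn w a b * w.count b
                  = nn w a b * (cnt w b p + 1)
                    + nn w a b * (w.count b - cnt w b ((p : ℕ) + 1)) := by
                refine mul_split _ _ _ _ ?_
                omega
              have E4 : nn w a b * ((w.count b - cnt w b ((p : ℕ) + 1)) + cnt w b qn + 1)
                  = nn w a b * (w.count b - cnt w b ((p : ℕ) + 1))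
                    + nn w a b * cnt w b qn + nn w a b := by ring
              have E5 : mm w a b * cnt w a i ≤ mm w a b * cnt w a qn :=
                Nat.mul_le_mul_left _ hAq
              have E6 : nn w a b * cnt w b qn = nn w a b * cnt w b i := by rw [hBq]
              omega
          · -- p = length - 1
            have hpk' : (p : ℕ) + 1 = w.length := by
              have := p.isLt; omega
            set j' : Fin w.length := ⟨0, hw⟩ with hj'def
            have hsa : segParikh w hw j' ⟨qn, hq⟩ a = cnt w a qn := by
              rw [segParikh_le w hw j' ⟨qn, hq⟩ a (Nat.zero_le _)]
              show cnt w a qn - cnt w a 0 = cnt w a qn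
              rw [cnt_zero]
              omega
            have hsb : segParikh w hw j' ⟨qn, hq⟩ b = cnt w b i := by
              rw [segParikh_le w hw j' ⟨qn, hq⟩ b (Nat.zero_le _)]
              show cnt w b qn - cnt w b 0 = cnt w b i
              rw [cnt_zero, hBq]
              omega
            have hfa : cnt w a p = w.count a := by
              have h20 := cnt_length w a
              rw [← hpk'] at h20
              rw [← h20, e1]
            have hfb : cnt w b p + 1 = w.count b := by
              have h20 := cnt_length w b
              rw [← hpk'] at h20
              rw [← h20, e2]
            by_cases hz : cnt w a qn = 0
            · have hz2 : cnt w a i = 0 := by omega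
              have h11 : 1 ≤ nn w a b * (cnt w b i + 1) :=
                Nat.mul_pos (by omega) (by omega)
              rw [hz2, Nat.mul_zero, hfa, key, ← hfb]
              omega
            · have hcp := hc ⟨qn, hq⟩ a b hab hgeta hq1 j' (by rw [hsa]; exact hz)
              rw [hsa, hsb] at hcp
              have E5 : mm w a b * cnt w a i ≤ mm w a b * cnt w a qn :=
                Nat.mul_le_mul_left _ hAq
              have E7 : nn w a b * (cnt w b p + 1) = nn w a b * w.count b := by rw [hfb]
              have E8 : mm w a b * cnt w a p = nn w a b * w.count b := by rw [hfa, key]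
              omega
      exact disab_conclude w hw i hi a b hab hn1 hSub hI hII
    case neg =>
      -- the b-free window wraps around the end of the word
      push_neg at hwrap
      have hqnB : qn = i + (D - 1) - w.length := by
        rw [hqndef]
        have h6 : i + (D - 1) = w.length + (i + (D - 1) - w.length) := by omega
        conv_lhs => rw [h6]
        rw [Nat.add_mod_left]
        refine Nat.mod_eq_of_lt ?_
        omega
      have hBfull : cnt w b i = w.count b := by
        rw [← cnt_length w b]
        refine (cnt_const w b (by omega) (le_refl _) ?_).symm
        intro r hr h1 h2
        have heq : (⟨(i + (r - i)) % w.length, Nat.mod_lt _ hw⟩ : Fin w.length)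
            = ⟨r, hr⟩ := by
          refine Fin.ext ?_
          show (i + (r - i)) % w.length = r
          have h3 : i + (r - i) = r := by omega
          rw [h3]; exact Nat.mod_eq_of_lt hr
        have h4 := hDmin (r - i) (by omega)
        rw [heq] at h4; exact h4
      have hq0 : cnt w b (qn + 1) = 0 := by
        rw [← cnt_zero w b]
        refine cnt_const w b (by omega) (by omega) ?_
        intro r hr h1 h2
        have heq : (⟨(i + (w.length - i + r)) % w.length, Nat.mod_lt _ hw⟩ : Fin w.length)
            = ⟨r, hr⟩ := by
          refine Fin.ext ?_
          show (i + (w.length - i + r)) % w.length = r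
          have h3 : i + (w.length - i + r) = w.length + r := by omega
          rw [h3, Nat.add_mod_left]
          exact Nat.mod_eq_of_lt hr
        have h4 := hDmin (w.length - i + r) (by omega)
        rw [heq] at h4; exact h4
      have hqb0 : cnt w b qn = 0 := by
        have := cnt_mono w b (show qn ≤ qn + 1 by omega)
        omega
      have hI : mm w a b * cnt w a i < nn w a b * (cnt w b i + 1) := by
        have h10 : cnt w a i ≤ w.count a := cnt_le_count w a i
        have h11 : mm w a b * cnt w a i ≤ mm w a b * w.count a :=
          Nat.mul_le_mul_left _ h10
        rw [Nat.mul_succ, hBfull]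
        omega
      have hII : ∀ p : Fin w.length, w.get p = b →
          nn w a b * (cnt w b p + 1) + mm w a b * cnt w a i
            < nn w a b * (cnt w b i + 1) + mm w a b * cnt w a p := by
        intro p hpb
        have hpb' : w.get ⟨(p : ℕ), p.isLt⟩ = b := by rw [Fin.eta]; exact hpb
        have e2 : cnt w b ((p : ℕ) + 1) = cnt w b p + 1 := by
          rw [cnt_succ w b p p.isLt, if_pos hpb']
        have e1 : cnt w a ((p : ℕ) + 1) = cnt w a p := by
          rw [cnt_succ w a p p.isLt, if_neg (by rw [hpb']; exact fun h => hab h.symm)]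
          omega
        have hpB : qn < (p : ℕ) ∧ (p : ℕ) < i := by
          constructor
          · by_contra hcon
            push_neg at hcon
            refine hDmin (w.length - i + (p : ℕ)) (by omega) ?_
            have heq : (⟨(i + (w.length - i + (p : ℕ))) % w.length, Nat.mod_lt _ hw⟩ :
                Fin w.length) = ⟨(p : ℕ), p.isLt⟩ := by
              refine Fin.ext ?_
              show (i + (w.length - i + (p : ℕ))) % w.length = (p : ℕ)
              have h3 : i + (w.length - i + (p : ℕ)) = w.length + (p : ℕ) := by omega
              rw [h3, Nat.add_mod_left]
              exact Nat.mod_eq_of_lt p.isLt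
            rw [heq]; exact hpb'
          · by_contra hcon
            push_neg at hcon
            refine hDmin ((p : ℕ) - i) (by omega) ?_
            have heq : (⟨(i + ((p : ℕ) - i)) % w.length, Nat.mod_lt _ hw⟩ : Fin w.length)
                = ⟨(p : ℕ), p.isLt⟩ := by
              refine Fin.ext ?_
              show (i + ((p : ℕ) - i)) % w.length = (p : ℕ)
              have h3 : i + ((p : ℕ) - i) = (p : ℕ) := by omega
              rw [h3]; exact Nat.mod_eq_of_lt p.isLt
            rw [heq]; exact hpb'
        set j' : Fin w.length := ⟨(p : ℕ) + 1, by omega⟩ with hj'def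
        have hqj' : qn < (j' : ℕ) := by
          show qn < (p : ℕ) + 1
          omega
        have hsa : segParikh w hw j' ⟨qn, hq⟩ a
            = (w.count a - cnt w a ((p : ℕ) + 1)) + cnt w a qn :=
          segParikh_gt w hw j' ⟨qn, hq⟩ a hqj'
        have hsb : segParikh w hw j' ⟨qn, hq⟩ b
            = (w.count b - cnt w b ((p : ℕ) + 1)) + cnt w b qn :=
          segParikh_gt w hw j' ⟨qn, hq⟩ b hqj'
        have hca : cnt w a ((p : ℕ) + 1) ≤ w.count a := cnt_le_count w a _
        have hcb : cnt w b ((p : ℕ) + 1) ≤ w.count b := cnt_le_count w b _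
        have hm2' : cnt w b ((p : ℕ) + 1) ≤ cnt w b i := cnt_mono w b (by omega)
        have hmulsucc2 : nn w a b * (cnt w b i + 1) = nn w a b * cnt w b i + nn w a b :=
          by ring
        by_cases hz : (w.count a - cnt w a ((p : ℕ) + 1)) + cnt w a qn = 0
        · have hz1 : cnt w a p = w.count a := by omega
          have h10 : nn w a b * (cnt w b p + 1) ≤ nn w a b * cnt w b i :=
            Nat.mul_le_mul_left _ (by omega)
          have h11 : mm w a b * cnt w a i ≤ mm w a b * w.count a :=
            Nat.mul_le_mul_left _ (cnt_le_count w a i)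
          have h12 : nn w a b * cnt w b i = nn w a b * w.count b := by rw [hBfull]
          rw [hz1, key]
          omega
        · have hcp := hc ⟨qn, hq⟩ a b hab hgeta hq1 j' (by rw [hsa]; exact hz)
          rw [hsa, hsb] at hcp
          have E1 : mm w a b * ((w.count a - cnt w a ((p : ℕ) + 1)) + cnt w a qn)
              = mm w a b * (w.count a - cnt w a ((p : ℕ) + 1))
                + mm w a b * cnt w a qn := by ring
          have E2 : mm w a b * w.count a
              = mm w a b * cnt w a p
                + mm w a b * (w.count a - cnt w a ((p : ℕ) + 1)) := by
            refine mul_split _ _ _ _ ?_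
            omega
          have E3 : nn w a b * w.count b
              = nn w a b * (cnt w b p + 1)
                + nn w a b * (w.count b - cnt w b ((p : ℕ) + 1)) := by
            refine mul_split _ _ _ _ ?_
            omega
          have E4 : nn w a b * ((w.count b - cnt w b ((p : ℕ) + 1)) + cnt w b qn + 1)
              = nn w a b * (w.count b - cnt w b ((p : ℕ) + 1))
                + nn w a b * cnt w b qn + nn w a b := by ring
          have E5 : mm w a b * cnt w a i ≤ mm w a b * w.count a :=
            Nat.mul_le_mul_left _ (cnt_le_count w a i)
          have E6 : nn w a b * cnt w b qn = 0 := by rw [hqb0, Nat.mul_zero]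
          have E7 : nn w a b * cnt w b i = nn w a b * w.count b := by rw [hBfull]
          omega
      exact disab_conclude w hw i hi a b hab hn1 hSub hI hII

lemma inj_pl [Fintype L] (w : List L)
    (hprime : Finset.univ.gcd (fun t => w.count t) = 1)
    (i j : ℕ) (hij : i < j) (hjk : j < w.length)
    (h : ∀ pl : L × L, MKf w i pl = MKf w j pl) : False := by
  have hstep1 : ∀ x y : L,
      w.count y * (cnt w x j - cnt w x i) = w.count x * (cnt w y j - cnt w y i) := by
    intro x y
    have hmx : cnt w x i ≤ cnt w x j := cnt_mono w x (by omega)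
    have hmy : cnt w y i ≤ cnt w y j := cnt_mono w y (by omega)
    by_cases hgz : Nat.gcd (w.count x) (w.count y) = 0
    · have hx0 := Nat.eq_zero_of_gcd_eq_zero_left hgz
      have hy0 := Nat.eq_zero_of_gcd_eq_zero_right hgz
      rw [hx0, hy0]
      simp
    · have hSi := sub_ok w i (by omega) x y
      have hSj := sub_ok w j (le_of_lt hjk) x y
      have hA : mm w x y * cnt w x i + nn w x y * cnt w y j
          = mm w x y * cnt w x j + nn w x y * cnt w y i := by
        have hM := h (x, y)
        unfold MKf at hM
        dsimp only at hM
        omega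
      have E1 : mm w x y * cnt w x j
          = mm w x y * cnt w x i + mm w x y * (cnt w x j - cnt w x i) :=
        mul_split _ _ _ _ (by omega)
      have E2 : nn w x y * cnt w y j
          = nn w x y * cnt w y i + nn w x y * (cnt w y j - cnt w y i) :=
        mul_split _ _ _ _ (by omega)
      have hEq : mm w x y * (cnt w x j - cnt w x i)
          = nn w x y * (cnt w y j - cnt w y i) := by omega
      have hy' : mm w x y * Nat.gcd (w.count x) (w.count y) = w.count y :=
        Nat.div_mul_cancel (Nat.gcd_dvd_right _ _)
      have hx' : nn w x y * Nat.gcd (w.count x) (w.count y) = w.count x :=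
        Nat.div_mul_cancel (Nat.gcd_dvd_left _ _)
      calc w.count y * (cnt w x j - cnt w x i)
          = (mm w x y * Nat.gcd (w.count x) (w.count y)) * (cnt w x j - cnt w x i) := by
            rw [hy']
        _ = Nat.gcd (w.count x) (w.count y) * (mm w x y * (cnt w x j - cnt w x i)) := by
            ring
        _ = Nat.gcd (w.count x) (w.count y) * (nn w x y * (cnt w y j - cnt w y i)) := by
            rw [hEq]
        _ = (nn w x y * Nat.gcd (w.count x) (w.count y)) * (cnt w y j - cnt w y i) := by
            ring
        _ = w.count x * (cnt w y j - cnt w y i) := by rw [hx']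
  have hsumj : ∑ t : L, cnt w t j = j := by
    have := sum_count (w.take j)
    rw [List.length_take] at this
    unfold cnt
    omega
  have hsumi : ∑ t : L, cnt w t i = i := by
    have := sum_count (w.take i)
    rw [List.length_take] at this
    unfold cnt
    omega
  have hsum : ∑ t : L, (cnt w t j - cnt w t i) = j - i := by
    have h1 : ∑ t : L, ((cnt w t j - cnt w t i) + cnt w t i) = ∑ t : L, cnt w t j := by
      refine Finset.sum_congr rfl fun t _ => ?_
      have := cnt_mono w t (le_of_lt hij)
      omega
    rw [Finset.sum_add_distrib, hsumi, hsumj] at h1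
    omega
  have hkD : ∀ x : L, w.length * (cnt w x j - cnt w x i) = (j - i) * w.count x := by
    intro x
    calc w.length * (cnt w x j - cnt w x i)
        = (∑ y : L, w.count y) * (cnt w x j - cnt w x i) := by rw [sum_count w]
      _ = ∑ y : L, w.count y * (cnt w x j - cnt w x i) := Finset.sum_mul _ _ _
      _ = ∑ y : L, w.count x * (cnt w y j - cnt w y i) := by
          exact Finset.sum_congr rfl fun y _ => hstep1 x y
      _ = w.count x * ∑ y : L, (cnt w y j - cnt w y i) := (Finset.mul_sum _ _ _).symm
      _ = w.count x * (j - i) := by rw [hsum]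
      _ = (j - i) * w.count x := by ring
  have hdvd : w.length ∣ (j - i) := by
    have h2 : w.length ∣ Finset.univ.gcd (fun x : L => (j - i) * w.count x) :=
      Finset.dvd_gcd fun x _ => ⟨cnt w x j - cnt w x i, (hkD x).symm⟩
    rw [Finset.gcd_mul_left, hprime] at h2
    simpa using h2
  have hpos : 0 < j - i := by omega
  have := Nat.le_of_dvd hpos hdvd
  omega

lemma Pre_pos (w : List L) (pl : L × L) (t : L) (h : 0 < Pre w pl t) : t = pl.2 := by
  unfold Pre at h
  split at h
  · next hcnd => exact hcnd.1
  · omega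

lemma Post_pos (w : List L) (pl : L × L) (t : L) (h : 0 < Post w t pl) : t = pl.1 := by
  unfold Post at h
  split at h
  · next hcnd => exact hcnd.1
  · omega

section Main

variable [Fintype L]

lemma main (w : List L) (hw : 0 < w.length)
    (hprime : Finset.univ.gcd (fun t => w.count t) = 1)
    (hc : ∀ (q : Fin w.length) (a b : L), a ≠ b →
      w.get q = a → w.get ⟨(q.val + 1) % w.length, Nat.mod_lt _ hw⟩ = b →
      ∀ j : Fin w.length, segParikh w hw j q a ≠ 0 →
        mm w a b * segParikh w hw j q a < nn w a b * (segParikh w hw j q b + 1)) :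
    cyclicWMGSolvable w := by
  classical
  set e : Fin (Fintype.card (L × L)) ≃ (L × L) := (Fintype.equivFin (L × L)).symm with hedef
  set N : PetriNet (Fin (Fintype.card (L × L))) L :=
    ⟨fun p t => Pre w (e p) t, fun t p => Post w t (e p)⟩ with hNdef
  set M0 : Fin (Fintype.card (L × L)) → ℕ := fun p => M0f w (e p) with hM0def
  set MK : ℕ → Fin (Fintype.card (L × L)) → ℕ := fun i p => MKf w i (e p) with hMKdef
  -- basic structure
  have hwmg : N.wmg := by
    constructor
    · intro p t t' h1 h2
      rw [Pre_pos w (e p) t h1, Pre_pos w (e p) t' h2]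
    · intro p t t' h1 h2
      rw [Post_pos w (e p) t h1, Post_pos w (e p) t' h2]
  have hMK0 : MK 0 = M0 := by
    funext p
    rw [hMKdef, hM0def]
    exact MKf_zero w (e p)
  have hMKcyc : MK w.length = MK 0 := by
    funext p
    rw [hMKdef]
    exact cycle_pl w (e p)
  have henab : ∀ (i : ℕ) (hi : i < w.length), N.enabled (MK i) (w.get ⟨i, hi⟩) := by
    intro i hi p
    exact enab_pl w i hi (e p)
  have hfire : ∀ (i : ℕ) (hi : i < w.length),
      N.fire (MK i) (w.get ⟨i, hi⟩) = MK (i + 1) := by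
    intro i hi
    funext p
    exact fire_pl w i hi (e p)
  have huniq : ∀ (i : ℕ) (hi : i < w.length) (t : L),
      N.enabled (MK i) t → t = w.get ⟨i, hi⟩ := by
    intro i hi t ht
    by_contra hne
    obtain ⟨pl, hpl⟩ := disab_pl w hw hc i hi t hne
    have := ht (e.symm pl)
    rw [hNdef] at this
    dsimp only at this
    rw [e.apply_symm_apply] at this
    rw [hMKdef] at this
    dsimp only at this
    rw [e.apply_symm_apply] at this
    omega
  have hMKmod : ∀ (i : ℕ), i < w.length → MK ((i + 1) % w.length) = MK (i + 1) := by
    intro i hi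
    rcases Nat.lt_or_ge (i + 1) w.length with h | h
    · rw [Nat.mod_eq_of_lt h]
    · have h1 : i + 1 = w.length := by omega
      rw [h1, Nat.mod_self, ← hMKcyc]
  have hreach : ∀ i : ℕ, i ≤ w.length → N.Reach M0 (MK i) := by
    intro i
    induction i with
    | zero => intro _; rw [hMK0]; exact Relation.ReflTransGen.refl
    | succ i ih =>
      intro hi
      have hiw : i < w.length := by omega
      refine Relation.ReflTransGen.tail (ih (by omega)) ?_
      exact ⟨w.get ⟨i, hiw⟩, henab i hiw, (hfire i hiw).symm⟩
  have hclassify : ∀ M, N.Reach M0 M → ∃ i : ℕ, i < w.length ∧ M = MK i := by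
    intro M hM
    induction hM with
    | refl => exact ⟨0, hw, hMK0.symm⟩
    | tail _ hstep ih =>
      obtain ⟨i, hi, rfl⟩ := ih
      obtain ⟨t, hen, hfir⟩ := hstep
      have ht := huniq i hi t hen
      subst ht
      refine ⟨(i + 1) % w.length, Nat.mod_lt _ hw, ?_⟩
      rw [hfir, hfire i hi, hMKmod i hi]
  have hMKinj : ∀ i j : Fin w.length, MK (i : ℕ) = MK (j : ℕ) → i = j := by
    intro i j hMKe
    have hpl : ∀ (i' j' : ℕ), i' < j' → j' < w.length → MK i' = MK j' → False := by
      intro i' j' h1 h2 hMM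
      refine inj_pl w hprime i' j' h1 h2 fun pl => ?_
      have := congrFun hMM (e.symm pl)
      rw [hMKdef] at this
      dsimp only at this
      rwa [e.apply_symm_apply] at this
    rcases lt_trichotomy (i : ℕ) (j : ℕ) with h | h | h
    · exact absurd (hpl i j h j.isLt hMKe) (by simp)
    · exact Fin.ext h
    · exact absurd (hpl j i h i.isLt hMKe.symm) (by simp)
  -- the equivalence
  set F : Fin w.length → {M : Fin (Fintype.card (L × L)) → ℕ // N.Reach M0 M} :=
    fun i => ⟨MK (i : ℕ), hreach i (le_of_lt i.isLt)⟩ with hFdef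
  have hFbij : Function.Bijective F := by
    constructor
    · intro i j hFe
      apply hMKinj
      rw [hFdef] at hFe
      exact congrArg Subtype.val hFe
    · intro ⟨M, hM⟩
      obtain ⟨i, hi, rfl⟩ := hclassify M hM
      exact ⟨⟨i, hi⟩, rfl⟩
  set E := Equiv.ofBijective F hFbij with hEdef
  have hEap : ∀ i, E i = F i := fun i => rfl
  -- step characterization
  have hstepiff : ∀ (i i' : Fin w.length) (t : L),
      N.step (MK (i : ℕ)) t (MK (i' : ℕ)) ↔
        (t = w.get i ∧ (i' : ℕ) = ((i : ℕ) + 1) % w.length) := by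
    intro i i' t
    constructor
    · rintro ⟨hen, hfir⟩
      have ht := huniq i i.isLt t hen
      have hgi : w.get ⟨(i : ℕ), i.isLt⟩ = w.get i := by congr 1
      constructor
      · rw [ht, hgi]
      · subst ht
        rw [hfire i i.isLt, ← hMKmod i i.isLt] at hfir
        have := hMKinj i' ⟨((i : ℕ) + 1) % w.length, Nat.mod_lt _ hw⟩ hfir
        rw [this]
    · rintro ⟨ht, hi'⟩
      have hgi : w.get ⟨(i : ℕ), i.isLt⟩ = w.get i := by congr 1
      constructor
      · rw [ht, ← hgi] at *
        exact henab i i.isLt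
      · have h1 : MK (i' : ℕ) = MK (((i : ℕ) + 1) % w.length) := by rw [hi']
        rw [h1, hMKmod i i.isLt, ← hfire i i.isLt, ht, ← hgi]
  -- conclude
  refine ⟨hw, Fintype.card (L × L), N, M0, hwmg, E.symm, ?_, ?_⟩
  · rw [Equiv.symm_apply_eq]
    show (⟨M0, Relation.ReflTransGen.refl⟩ :
      {M : Fin (Fintype.card (L × L)) → ℕ // N.Reach M0 M}) = F ⟨0, hw⟩
    refine Subtype.ext ?_
    show M0 = MK 0
    rw [hMK0]
  · intro s t s'
    have hs : s = F (E.symm s) := by rw [← hEap, Equiv.apply_symm_apply]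
    have hs' : s' = F (E.symm s') := by rw [← hEap, Equiv.apply_symm_apply]
    show N.step s.1 t s'.1 ↔ _
    constructor
    · intro hstep
      rw [hs, hs'] at hstep
      have := (hstepiff (E.symm s) (E.symm s') t).mp hstep
      exact this
    · intro htr
      rw [hs, hs']
      exact (hstepiff (E.symm s) (E.symm s') t).mpr htr

end Main
end Stmt7Aux

/-- sufficient condition for cyclic WMG-solvability. -/
theorem stmt7 {L : Type} [Fintype L] [DecidableEq L] (w : List L) (hw : 0 < w.length)
    (hprime : primeVec (fun t => parikh w t))
    (hcond : ∀ (q : Fin w.length) (a b : L), a ≠ b →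
      w.get q = a → w.get ⟨(q.val + 1) % w.length, Nat.mod_lt _ hw⟩ = b →
      ∀ j : Fin w.length, segParikh w hw j q a ≠ 0 →
        (parikh w b / Nat.gcd (parikh w a) (parikh w b)) * segParikh w hw j q a <
          (parikh w a / Nat.gcd (parikh w a) (parikh w b)) * (segParikh w hw j q b + 1)) :
    cyclicWMGSolvable w := by
  refine Stmt7Aux.main w hw ?_ ?_
  · exact hprime
  · intro q a b hab hga hgb j hseg
    exact hcond q a b hab hga hgb j hseg
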